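/- arXiv:2309.15509 — 3 statements merged into one kernel-verified Lean document; each statement's English description precedes it below -/
import Mathlib

section
/- Let I be a type (the set of k-cells), J a type (the set of (k+1)-cells), and [·:·] : J → I → ℤ a function (incidence numbers) such that for each α ∈ I the sums d₊,₂(α) = Σ_β [β:α]², d₊(α) = Σ_β |[β:α]|, and d(α,α',β) = −[β:α]·[β:α'] are well-defined (finitely supported), and let d₋ : I → ℝ with d₋(α) ≥ 1. Fix q ∈ [0,1] and assume d₊(α)·d₋(α) ≥ 1 and q·d₊(α)·d₋(α) + (1−q)·d₊,₂(α) > 0 for all α. Define matrices (in the sense of functions I → I → ℝ acting on finitely supported functions): (B_q)_{α,α'} = q if α = α', and (1−q)/(d₊(α')d₋(α')) · Σ_β d(α,α',β) if α ≠ α'; (Δ)_{α,α'} = d₊,₂(α) if α = α', and −Σ_β d(α,α',β) if α ≠ α'; (M_{1,q})_{α,α} = d₊(α)d₋(α)/(q·d₊(α)d₋(α)+(1−q)·d₊,₂(α)) and (M_{2,q})_{α,α} = (1−q)/(q·d₊(α)d₋(α)+(1−q)·d₊,₂(α)), both diagonal. Then the matrix identity B_q · M_{1,q} = Id − Δ ·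 M_{2,q} holds entrywise. -/
open scoped BigOperators

/-- the matrix identity `B_q · M_{1,q} = Id − Δ · M_{2,q}` (entrywise;
since `M_{1,q}` and `M_{2,q}` are diagonal, the `(α,α')` entry of a product with them
is the `(α,α')` entry of the left factor times the diagonal entry at `α'`). -/
theorem stmt4 {I J : Type*} [DecidableEq I] (inc : J → I → ℤ)
    (hfin : ∀ α : I, {β : J | inc β α ≠ 0}.Finite)
    (dplus2 dplus dminus : I → ℝ)
    (hdplus2 : ∀ α, dplus2 α = ∑ᶠ β : J, ((inc β α : ℝ)) ^ 2)
    (hdplus : ∀ α, dplus α = ∑ᶠ β : J, |(inc β α : ℝ)|)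
    (hdminus : ∀ α, 1 ≤ dminus α)
    (q : ℝ) (hq : q ∈ Set.Icc (0:ℝ) 1)
    (hd1 : ∀ α, 1 ≤ dplus α * dminus α)
    (hdenom : ∀ α, 0 < q * (dplus α * dminus α) + (1 - q) * dplus2 α)
    (Bq Δ : I → I → ℝ) (M1 M2 : I → ℝ)
    (hBq : ∀ α α', Bq α α' = if α = α' then q else
      (1 - q) / (dplus α' * dminus α') * ∑ᶠ β : J, (-(inc β α : ℝ) * (inc β α' : ℝ)))
    (hΔ : ∀ α α', Δ α α' = if α = α' then dplus2 α else
      -∑ᶠ β : J, (-(inc β α : ℝ) * (inc β α' : ℝ)))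
    (hM1 : ∀ α, M1 α = dplus α * dminus α / (q * (dplus α * dminus α) + (1 - q) * dplus2 α))
    (hM2 : ∀ α, M2 α = (1 - q) / (q * (dplus α * dminus α) + (1 - q) * dplus2 α)) :
    ∀ α α', Bq α α' * M1 α' = (if α = α' then 1 else 0) - Δ α α' * M2 α' := by
  intro α α'
  have hD : dplus α' * dminus α' ≠ 0 := by
    have := hd1 α'; linarith
  have hden : q * (dplus α' * dminus α') + (1 - q) * dplus2 α' ≠ 0 :=
    ne_of_gt (hdenom α')
  rw [hBq, hΔ, hM1, hM2]
  by_cases h : α = α'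
  · simp only [h, if_pos rfl, ↓reduceIte]
    linear_combination mul_inv_cancel₀ hden
  · simp only [if_neg h]
    have key : (1 - q) / (dplus α' * dminus α') *
        (dplus α' * dminus α' / (q * (dplus α' * dminus α') + (1 - q) * dplus2 α')) =
        (1 - q) / (q * (dplus α' * dminus α') + (1 - q) * dplus2 α') := by
      rw [div_mul_div_comm, mul_comm (1 - q) (dplus α' * dminus α'), mul_div_mul_left _ _ hD]
    linear_combination (∑ᶠ β : J, (-(inc β α : ℝ) * (inc β α' : ℝ))) * key
end

section
/- Let F, F' : ℝ≥0 → [0,∞] be monotonically increasing right-continuous functions that are dilatationally equivalent, i.e., there exist C > 0 and λ₀ > 0 with F'(C⁻¹λ) ≤ F(λ) ≤ F'(Cλ) for all λ ∈ [0, λ₀]. Then F(0) = F'(0), and the Novikov–Shubin invariants agree: liminf_{λ→0⁺} log(F(λ) − F(0))/log(λ) = liminf_{λ→0⁺} log(F'(λ) − F'(0))/log(λ). -/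
open scoped ENNReal Topology
open Filter

/-- If `r → 1`, then `liminf B ≤ liminf (B * r)` in `EReal`. -/
lemma aux_le_liminf_mul {α : Type*} {f : Filter α} (B : α → EReal) (r : α → ℝ)
    (hr : Filter.Tendsto r f (𝓝 1)) :
    Filter.liminf B f ≤ Filter.liminf (fun x => B x * (r x : EReal)) f := by
  refine le_of_forall_lt fun z hz => ?_
  obtain ⟨c, hzc, hc⟩ := EReal.exists_between_coe_real hz
  obtain ⟨c', hcc', hc'⟩ := EReal.exists_between_coe_real hc
  have hcc'r : c < c' := by exact_mod_cast hcc'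
  refine lt_of_lt_of_le hzc (Filter.le_liminf_of_le (by isBoundedDefault) ?_)
  set ε : ℝ := min (1/2) ((c' - c)/(|c'|+1)) with hε_def
  have habs : (0:ℝ) < |c'| + 1 := by positivity
  have hε : 0 < ε := by
    apply lt_min (by norm_num)
    exact div_pos (by linarith) habs
  have hε12 : ε ≤ 1/2 := min_le_left _ _
  have hεle : (|c'|+1) * ε ≤ c' - c := by
    have := min_le_right (1/2 : ℝ) ((c' - c)/(|c'|+1))
    calc (|c'|+1) * ε ≤ (|c'|+1) * ((c' - c)/(|c'|+1)) := by
          exact mul_le_mul_of_nonneg_left this (le_of_lt habs)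
      _ = c' - c := by field_simp
  have h1 : ∀ᶠ x in f, (c' : EReal) < B x := Filter.eventually_lt_of_lt_liminf hc'
  have h2 : ∀ᶠ x in f, r x ∈ Set.Ioo (1-ε) (1+ε) :=
    hr (Ioo_mem_nhds (by linarith) (by linarith))
  filter_upwards [h1, h2] with x hx1 hx2
  obtain ⟨ht1, ht2⟩ := hx2
  have ht0 : (0:ℝ) < r x := by linarith
  set b := B x with hb
  clear_value b
  induction b using EReal.rec with
  | bot => exact absurd hx1 (by simp)
  | top =>
      rw [EReal.top_mul_coe_of_pos ht0]
      exact le_top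
  | coe b =>
      rw [← EReal.coe_mul, EReal.coe_le_coe_iff]
      have hb' : c' < b := by exact_mod_cast hx1
      rcases le_or_gt 0 b with hb0 | hb0
      · have hmt : b*(1-ε) ≤ b * r x := mul_le_mul_of_nonneg_left ht1.le hb0
        rcases le_or_gt c' 0 with hc0 | hc0
        · have : (0:ℝ) ≤ b*(1-ε) := mul_nonneg hb0 (by linarith)
          linarith
        · have h3 : c'*(1-ε) ≤ b*(1-ε) :=
            mul_le_mul_of_nonneg_right hb'.le (by linarith)
          have h4 : c'*ε ≤ (|c'|+1)*ε :=
            mul_le_mul_of_nonneg_right (by linarith [le_abs_self c']) hε.le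
          nlinarith
      · have hmt : b*(1+ε) ≤ b * r x := by nlinarith
        have h5 : c'*(1+ε) ≤ b*(1+ε) :=
          mul_le_mul_of_nonneg_right hb'.le (by linarith)
        have h6 : (-c')*ε ≤ (|c'|+1)*ε :=
          mul_le_mul_of_nonneg_right (by linarith [neg_le_abs c']) hε.le
        nlinarith

lemma aux_liminf_mul {α : Type*} {f : Filter α} (B : α → EReal) (r : α → ℝ)
    (hr : Filter.Tendsto r f (𝓝 1)) :
    Filter.liminf (fun x => B x * (r x : EReal)) f = Filter.liminf B f := by
  refine le_antisymm ?_ (aux_le_liminf_mul B r hr)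
  have hinv : Filter.Tendsto (fun x => (r x)⁻¹) f (𝓝 1) := by
    simpa using hr.inv₀ one_ne_zero
  have h := aux_le_liminf_mul (fun x => B x * (r x : EReal)) (fun x => (r x)⁻¹) hinv
  refine h.trans_eq (Filter.liminf_congr ?_)
  have hne : ∀ᶠ x in f, r x ≠ 0 := hr.eventually_ne one_ne_zero
  filter_upwards [hne] with x hx
  rw [mul_assoc, ← EReal.coe_mul, mul_inv_cancel₀ hx, EReal.coe_one, mul_one]

lemma aux_map_mul_left {C : ℝ} (hC : 0 < C) :
    Filter.map (fun x : ℝ => C * x) (𝓝[>] (0:ℝ)) = 𝓝[>] (0:ℝ) := by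
  have key : ∀ {D : ℝ}, 0 < D →
      Filter.map (fun x : ℝ => D * x) (𝓝[>] (0:ℝ)) ≤ 𝓝[>] (0:ℝ) := by
    intro D hD
    rw [Filter.map_le_iff_le_comap, ← Filter.tendsto_iff_comap]
    rw [tendsto_nhdsWithin_iff]
    constructor
    · have : Filter.Tendsto (fun x : ℝ => D * x) (𝓝 0) (𝓝 0) := by
        simpa using (continuous_mul_left D).tendsto (0:ℝ)
      exact this.mono_left nhdsWithin_le_nhds
    · filter_upwards [self_mem_nhdsWithin] with x hx
      exact mul_pos hD hx
  refine le_antisymm (key hC) ?_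
  have h2 := key (inv_pos.2 hC)
  have hcomp : (fun x : ℝ => C * x) ∘ (fun x : ℝ => C⁻¹ * x) = id := by
    funext x
    simp [Function.comp, ← mul_assoc, mul_inv_cancel₀ hC.ne']
  calc 𝓝[>] (0:ℝ)
      = Filter.map ((fun x : ℝ => C * x) ∘ (fun x : ℝ => C⁻¹ * x)) (𝓝[>] (0:ℝ)) := by
        rw [hcomp, Filter.map_id]
    _ = Filter.map (fun x : ℝ => C * x)
          (Filter.map (fun x : ℝ => C⁻¹ * x) (𝓝[>] (0:ℝ))) := (Filter.map_map).symm
    _ ≤ Filter.map (fun x : ℝ => C * x) (𝓝[>] (0:ℝ)) := Filter.map_mono h2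

lemma aux_scale (A : ℝ → EReal) {C : ℝ} (hC : 0 < C) :
    Filter.liminf (fun lam : ℝ => A (C * lam) / (Real.log lam : EReal)) (𝓝[>] (0:ℝ))
      = Filter.liminf (fun lam : ℝ => A lam / (Real.log lam : EReal)) (𝓝[>] (0:ℝ)) := by
  have hmap := aux_map_mul_left hC
  conv_rhs => rw [← hmap]
  rw [show Filter.liminf (fun lam : ℝ => A lam / (Real.log lam : EReal))
      (Filter.map (fun x : ℝ => C * x) (𝓝[>] (0:ℝ)))
      = Filter.liminf ((fun lam : ℝ => A lam / (Real.log lam : EReal)) ∘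
          (fun x : ℝ => C * x)) (𝓝[>] (0:ℝ)) from by
    simp only [Filter.liminf, Filter.map_map]]
  -- now goal : liminf (A(Cλ)/log λ) = liminf (A(Cλ)/log(Cλ))
  set B : ℝ → EReal := fun lam => A (C * lam) / (Real.log (C * lam) : EReal) with hB
  set r : ℝ → ℝ := fun lam => Real.log (C * lam) / Real.log lam with hr_def
  have hδ : (0:ℝ) < min 1 C⁻¹ := lt_min one_pos (inv_pos.2 hC)
  have hmem : Set.Ioo (0:ℝ) (min 1 C⁻¹) ∈ 𝓝[>] (0:ℝ) := Ioo_mem_nhdsGT hδ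
  have hlog : Filter.Tendsto Real.log (𝓝[>] (0:ℝ)) atBot :=
    Real.tendsto_log_nhdsGT_zero
  have hinv0 : Filter.Tendsto (fun lam : ℝ => (Real.log lam)⁻¹) (𝓝[>] (0:ℝ)) (𝓝 0) := by
    have hneg : Filter.Tendsto (fun lam : ℝ => -Real.log lam) (𝓝[>] (0:ℝ)) atTop :=
      tendsto_neg_atBot_atTop.comp hlog
    have := hneg.inv_tendsto_atTop
    have h2 := this.neg
    simp only [Pi.inv_apply, inv_neg, neg_neg, neg_zero] at h2
    exact h2
  have hr : Filter.Tendsto r (𝓝[>] (0:ℝ)) (𝓝 1) := by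
    have h1 : Filter.Tendsto (fun lam : ℝ => 1 + Real.log C * (Real.log lam)⁻¹)
        (𝓝[>] (0:ℝ)) (𝓝 1) := by
      have := (tendsto_const_nhds (x := Real.log C)).mul hinv0
      have h2 := (tendsto_const_nhds (x := (1:ℝ)) (f := 𝓝[>] (0:ℝ))).add this
      simpa using h2
    refine Filter.Tendsto.congr' ?_ h1
    filter_upwards [hmem] with lam hlam
    have hlam0 : 0 < lam := hlam.1
    have hlam1 : lam < 1 := lt_of_lt_of_le hlam.2 (min_le_left _ _)
    have hlogne : Real.log lam ≠ 0 := ne_of_lt (Real.log_neg hlam0 hlam1)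
    rw [hr_def]
    simp only []
    rw [Real.log_mul hC.ne' hlam0.ne']
    field_simp
    ring
  have heq : ∀ᶠ lam in 𝓝[>] (0:ℝ),
      A (C * lam) / (Real.log lam : EReal) = B lam * (r lam : EReal) := by
    filter_upwards [hmem] with lam hlam
    have hlam0 : 0 < lam := hlam.1
    have hlam1 : lam < 1 := lt_of_lt_of_le hlam.2 (min_le_left _ _)
    have hClam1 : C * lam < 1 := by
      have := hlam.2
      have h3 : lam < C⁻¹ := lt_of_lt_of_le this (min_le_right _ _)
      calc C * lam < C * C⁻¹ := by exact mul_lt_mul_of_pos_left h3 hC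
        _ = 1 := mul_inv_cancel₀ hC.ne'
    have hlogne : Real.log lam ≠ 0 := ne_of_lt (Real.log_neg hlam0 hlam1)
    have hlogCne : Real.log (C * lam) ≠ 0 :=
      ne_of_lt (Real.log_neg (mul_pos hC hlam0) hClam1)
    show A (C * lam) / (Real.log lam : EReal)
        = (A (C * lam) / (Real.log (C * lam) : EReal))
          * ((Real.log (C * lam) / Real.log lam : ℝ) : EReal)
    rw [div_eq_mul_inv, div_eq_mul_inv, ← EReal.coe_inv, ← EReal.coe_inv,
      mul_assoc, ← EReal.coe_mul]
    congr 1
    have hre : (Real.log lam)⁻¹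
        = (Real.log (C*lam))⁻¹ * (Real.log (C*lam) / Real.log lam) := by
      field_simp
    exact_mod_cast hre
  rw [Filter.liminf_congr heq, aux_liminf_mul B r hr]
  rfl

/-- dilatational equivalence preserves `F(0)` and the Novikov–Shubin invariant. -/
theorem stmt9 (F F' : ℝ → ℝ≥0∞)
    (hFmono : MonotoneOn F (Set.Ici 0)) (hF'mono : MonotoneOn F' (Set.Ici 0))
    (hFrc : ∀ x ∈ Set.Ici (0:ℝ), ContinuousWithinAt F (Set.Ici x) x)
    (hF'rc : ∀ x ∈ Set.Ici (0:ℝ), ContinuousWithinAt F' (Set.Ici x) x)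
    (C lam₀ : ℝ) (hC : 0 < C) (hlam₀ : 0 < lam₀)
    (hdil : ∀ lam ∈ Set.Icc (0:ℝ) lam₀, F' (C⁻¹ * lam) ≤ F lam ∧ F lam ≤ F' (C * lam)) :
    F 0 = F' 0 ∧
      Filter.liminf (fun lam : ℝ =>
          (ENNReal.log (F lam - F 0)) / ((Real.log lam : EReal))) (𝓝[>] (0:ℝ)) =
        Filter.liminf (fun lam : ℝ =>
          (ENNReal.log (F' lam - F' 0)) / ((Real.log lam : EReal))) (𝓝[>] (0:ℝ)) := by
  have h00 := hdil 0 ⟨le_refl 0, hlam₀.le⟩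
  simp only [mul_zero] at h00
  have h0 : F 0 = F' 0 := le_antisymm h00.2 h00.1
  refine ⟨h0, ?_⟩
  set A : ℝ → EReal := fun mu => ENNReal.log (F' mu - F' 0) with hA
  have hδ : (0:ℝ) < min lam₀ 1 := lt_min hlam₀ one_pos
  have hmem : Set.Ioo (0:ℝ) (min lam₀ 1) ∈ 𝓝[>] (0:ℝ) := Ioo_mem_nhdsGT hδ
  have hlogneg : ∀ lam ∈ Set.Ioo (0:ℝ) (min lam₀ 1), ((Real.log lam : EReal)) ≤ 0 := by
    intro lam hlam
    have : Real.log lam < 0 :=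
      Real.log_neg hlam.1 (lt_of_lt_of_le hlam.2 (min_le_right _ _))
    exact_mod_cast this.le
  have hge : Filter.liminf (fun lam : ℝ => A (C * lam) / (Real.log lam : EReal))
      (𝓝[>] (0:ℝ)) ≤ Filter.liminf (fun lam : ℝ =>
        (ENNReal.log (F lam - F 0)) / ((Real.log lam : EReal))) (𝓝[>] (0:ℝ)) := by
    refine Filter.liminf_le_liminf ?_ (by isBoundedDefault) (by isBoundedDefault)
    filter_upwards [hmem] with lam hlam
    have h1 : F lam ≤ F' (C * lam) :=
      (hdil lam ⟨hlam.1.le, (lt_of_lt_of_le hlam.2 (min_le_left _ _)).le⟩).2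
    have h2 : ENNReal.log (F' (C*lam) - F' 0) ≥ ENNReal.log (F lam - F 0) := by
      rw [h0]
      exact ENNReal.log_monotone (tsub_le_tsub_right h1 _)
    exact EReal.div_le_div_right_of_nonpos (hlogneg lam hlam) h2
  have hle : Filter.liminf (fun lam : ℝ =>
        (ENNReal.log (F lam - F 0)) / ((Real.log lam : EReal))) (𝓝[>] (0:ℝ))
      ≤ Filter.liminf (fun lam : ℝ => A (C⁻¹ * lam) / (Real.log lam : EReal))
      (𝓝[>] (0:ℝ)) := by
    refine Filter.liminf_le_liminf ?_ (by isBoundedDefault) (by isBoundedDefault)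
    filter_upwards [hmem] with lam hlam
    have h1 : F' (C⁻¹ * lam) ≤ F lam :=
      (hdil lam ⟨hlam.1.le, (lt_of_lt_of_le hlam.2 (min_le_left _ _)).le⟩).1
    have h2 : ENNReal.log (F lam - F 0) ≥ ENNReal.log (F' (C⁻¹*lam) - F' 0) := by
      rw [h0]
      exact ENNReal.log_monotone (tsub_le_tsub_right h1 _)
    exact EReal.div_le_div_right_of_nonpos (hlogneg lam hlam) h2
  have e1 := aux_scale A hC
  have e2 := aux_scale A (inv_pos.2 hC)
  rw [e1] at hge
  rw [e2] at hle
  exact le_antisymm hle hge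
end

section
/- Let F : ℝ≥0 → [0,∞) be monotonically increasing with b := F(0), and let p̃ : ℕ → ℝ satisfy, for all λ ∈ (0,1] and n ∈ ℕ, (1−λ)ⁿ · F(√λ) ≤ p̃(n) ≤ (1−λ)ⁿ + F(√λ). If there exist constants C > 0 and a > 0 such that p̃(n) ≥ b + C·n^{−a} for all n ≥ 1, then liminf_{λ→0⁺} log(F(√λ) − b)/log(λ) ≤ a. -/
open scoped Topology

open Filter Real

private lemma stmt10_rpow_tendsto (r : ℝ) (hr : 0 < r) :
    Filter.Tendsto (fun x : ℝ => x ^ r) (𝓝[>] (0:ℝ)) (𝓝 0) := by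
  have h1 : Filter.Tendsto (fun x : ℝ => Real.exp (Real.log x * r)) (𝓝[>] (0:ℝ)) (𝓝 0) :=
    Real.tendsto_exp_atBot.comp (Real.tendsto_log_nhdsGT_zero.atBot_mul_const hr)
  refine h1.congr' ?_
  filter_upwards [self_mem_nhdsWithin] with x hx
  exact (Real.rpow_def_of_pos hx r).symm

private lemma stmt10_aux (F : ℝ → ℝ) (b : ℝ) (p : ℕ → ℝ)
    (hp : ∀ lam ∈ Set.Ioc (0:ℝ) 1, ∀ n : ℕ, p n ≤ (1 - lam) ^ n + F (Real.sqrt lam))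
    (a : ℝ) (ha : 0 < a) (C : ℝ) (hC : 0 < C)
    (hlow : ∀ n : ℕ, 1 ≤ n → b + C * (n : ℝ) ^ (-a : ℝ) ≤ p n)
    (ε : ℝ) (hε : 0 < ε) :
    ∀ᶠ lam in 𝓝[>] (0:ℝ),
      Real.log (F (Real.sqrt lam) - b) / Real.log lam ≤ a + ε := by
  set M : ℝ := a + ε with hM
  set δ : ℝ := ε / (2 * a) with hδ
  have hδpos : 0 < δ := by positivity
  have hMpos : 0 < M := by positivity
  -- eventual smallness facts
  have h01 : Set.Ioo (0:ℝ) 1 ∈ 𝓝[>] (0:ℝ) :=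
    Ioo_mem_nhdsGT zero_lt_one
  have h2 : ∀ᶠ lam in 𝓝[>] (0:ℝ), Real.log lam ≤ (2/ε) * Real.log (C/2) :=
    Real.tendsto_log_nhdsGT_zero.eventually (Filter.eventually_le_atBot _)
  have h3 : ∀ᶠ lam in 𝓝[>] (0:ℝ), lam ^ (ε/2 : ℝ) < C/2 :=
    (stmt10_rpow_tendsto (ε/2) (by positivity)).eventually_lt_const (by positivity)
  have h4 : ∀ᶠ lam in 𝓝[>] (0:ℝ),
      M * (-(Real.log lam * lam ^ δ)) + 2 * lam ^ ((1:ℝ)+δ) < 1 := by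
    have t1 : Filter.Tendsto (fun lam : ℝ => M * (-(Real.log lam * lam ^ δ)) +
        2 * lam ^ ((1:ℝ)+δ)) (𝓝[>] (0:ℝ)) (𝓝 (M * (-(0:ℝ)) + 2 * 0)) := by
      exact (((tendsto_log_mul_rpow_nhdsGT_zero hδpos).neg.const_mul M).add
        ((stmt10_rpow_tendsto ((1:ℝ)+δ) (by positivity)).const_mul 2))
    refine t1.eventually_lt_const ?_
    norm_num
  filter_upwards [h01, h2, h3, h4] with lam hlam01 h2 h3 h4
  obtain ⟨hlam, hlam1⟩ := hlam01
  have hlaminv : (1:ℝ) ≤ lam⁻¹ := (one_le_inv₀ hlam).2 hlam1.le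
  have hloginv : 0 ≤ Real.log lam⁻¹ := Real.log_nonneg hlaminv
  set R : ℝ := M * lam⁻¹ * Real.log lam⁻¹ with hR
  have hR0 : 0 ≤ R := by positivity
  set n : ℕ := ⌈R⌉₊ + 1 with hn
  have hn1 : 1 ≤ n := Nat.le_add_left 1 _
  have hnge : R ≤ (n : ℝ) := by
    have := Nat.le_ceil R
    push_cast [hn]; linarith
  have hnle : (n : ℝ) ≤ R + 2 := by
    have := Nat.ceil_lt_add_one hR0
    push_cast [hn]; linarith
  have hpowpos : (0:ℝ) < lam ^ ((1:ℝ)+δ) := Real.rpow_pos_of_pos hlam _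
  have hsplit : lam ^ ((1:ℝ)+δ) = lam * lam ^ δ := by
    rw [Real.rpow_add hlam, Real.rpow_one]
  -- n ≤ lam ^ (-(1+δ))
  have hnX : (n : ℝ) ≤ lam ^ (-((1:ℝ)+δ)) := by
    rw [Real.rpow_neg hlam.le, ← one_div, le_div_iff₀ hpowpos]
    have key : (R + 2) * lam ^ ((1:ℝ)+δ)
        = M * (-(Real.log lam * lam ^ δ)) + 2 * lam ^ ((1:ℝ)+δ) := by
      rw [hsplit, hR, Real.log_inv]
      field_simp
    have h5 : (n : ℝ) * lam ^ ((1:ℝ)+δ) ≤ (R + 2) * lam ^ ((1:ℝ)+δ) :=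
      mul_le_mul_of_nonneg_right hnle hpowpos.le
    rw [key] at h5
    linarith
  -- (1 - lam)^n ≤ lam ^ M
  have hB1 : (1 - lam) ^ n ≤ lam ^ (M : ℝ) := by
    have e1 : (1 - lam) ^ n ≤ Real.exp (-lam) ^ n := by
      refine pow_le_pow_left₀ (by linarith) ?_ n
      have := Real.add_one_le_exp (-lam)
      linarith
    have e2 : Real.exp (-lam) ^ n = Real.exp ((n:ℝ) * (-lam)) := (Real.exp_nat_mul _ n).symm
    have e3 : Real.exp ((n:ℝ) * (-lam)) ≤ Real.exp (Real.log lam * M) := by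
      apply Real.exp_le_exp.2
      have h6 : R * lam ≤ (n:ℝ) * lam := mul_le_mul_of_nonneg_right hnge hlam.le
      have h7 : R * lam = M * Real.log lam⁻¹ := by
        rw [hR]; field_simp
      rw [Real.log_inv] at h7
      nlinarith [h6, h7]
    have e4 : Real.exp (Real.log lam * M) = lam ^ (M : ℝ) := (Real.rpow_def_of_pos hlam M).symm
    calc (1 - lam) ^ n ≤ Real.exp (-lam) ^ n := e1
      _ = Real.exp ((n:ℝ) * (-lam)) := e2
      _ ≤ Real.exp (Real.log lam * M) := e3
      _ = lam ^ (M : ℝ) := e4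
  -- C * lam ^ (a + ε/2) ≤ C * n ^ (-a)
  have hnpos : (0:ℝ) < (n:ℝ) := by exact_mod_cast hn1
  have hB2 : C * lam ^ (a + ε/2 : ℝ) ≤ C * (n:ℝ) ^ (-a : ℝ) := by
    have hpow : (n:ℝ) ^ (a:ℝ) ≤ (lam ^ (-((1:ℝ)+δ))) ^ (a:ℝ) :=
      Real.rpow_le_rpow hnpos.le hnX ha.le
    have hinv : (lam ^ (-((1:ℝ)+δ))) ^ (-a:ℝ) ≤ (n:ℝ) ^ (-a:ℝ) := by
      rw [Real.rpow_neg (Real.rpow_pos_of_pos hlam _).le, Real.rpow_neg hnpos.le]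
      exact inv_anti₀ (Real.rpow_pos_of_pos hnpos a) hpow
    have hXa : (lam ^ (-((1:ℝ)+δ))) ^ (-a:ℝ) = lam ^ (a + ε/2 : ℝ) := by
      rw [← Real.rpow_mul hlam.le]
      congr 1
      rw [hδ]
      field_simp
    rw [hXa] at hinv
    exact mul_le_mul_of_nonneg_left hinv hC.le
  -- lam ^ M ≤ (C/2) * lam ^ (a + ε/2)
  have hB3 : lam ^ (M:ℝ) ≤ (C/2) * lam ^ (a + ε/2 : ℝ) := by
    have hsplit2 : lam ^ (M:ℝ) = lam ^ (ε/2 : ℝ) * lam ^ (a + ε/2 : ℝ) := by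
      rw [← Real.rpow_add hlam]
      congr 1
      rw [hM]; ring
    rw [hsplit2]
    exact mul_le_mul_of_nonneg_right h3.le (Real.rpow_pos_of_pos hlam _).le
  -- combine
  have hple := hp lam ⟨hlam, hlam1.le⟩ n
  have hlown := hlow n hn1
  have hy : (C/2) * lam ^ (a + ε/2 : ℝ) ≤ F (Real.sqrt lam) - b := by
    nlinarith [hB1, hB2, hB3, hple, hlown]
  have hypos : (0:ℝ) < (C/2) * lam ^ (a + ε/2 : ℝ) := by
    have := Real.rpow_pos_of_pos hlam (a + ε/2)
    positivity
  have hlogy : Real.log ((C/2) * lam ^ (a + ε/2 : ℝ)) ≤ Real.log (F (Real.sqrt lam) - b) :=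
    Real.log_le_log hypos hy
  have hlogeq : Real.log ((C/2) * lam ^ (a + ε/2 : ℝ))
      = Real.log (C/2) + (a + ε/2) * Real.log lam := by
    rw [Real.log_mul (by positivity) (Real.rpow_pos_of_pos hlam _).ne', Real.log_rpow hlam]
  have hloglam : Real.log lam < 0 := Real.log_neg hlam hlam1
  rw [div_le_iff_of_neg hloglam]
  have h8 : (ε/2) * Real.log lam ≤ Real.log (C/2) := by
    have := mul_le_mul_of_nonneg_left h2 (by positivity : (0:ℝ) ≤ ε/2)
    calc (ε/2) * Real.log lam ≤ (ε/2) * ((2/ε) * Real.log (C/2)) := this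
      _ = Real.log (C/2) := by field_simp
  have h10 : Real.log (C/2) + (a + ε/2) * Real.log lam ≤ Real.log (F (Real.sqrt lam) - b) :=
    hlogeq ▸ hlogy
  rw [show M * Real.log lam = (a + ε/2) * Real.log lam + (ε/2) * Real.log lam by
    rw [hM]; ring]
  linarith [h8, h10]

/-- a polynomial lower bound on the return quantity forces an upper
bound on half the Novikov–Shubin invariant. -/
theorem stmt10 (F : ℝ → ℝ) (hFmono : MonotoneOn F (Set.Ici 0))
    (hFnonneg : ∀ lam ∈ Set.Ici (0:ℝ), 0 ≤ F lam)
    (b : ℝ) (hb : b = F 0)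
    (p : ℕ → ℝ)
    (hp : ∀ lam ∈ Set.Ioc (0:ℝ) 1, ∀ n : ℕ,
      (1 - lam) ^ n * F (Real.sqrt lam) ≤ p n ∧
        p n ≤ (1 - lam) ^ n + F (Real.sqrt lam))
    (a : ℝ) (ha : 0 < a)
    (hlow : ∃ C : ℝ, 0 < C ∧ ∀ n : ℕ, 1 ≤ n → b + C * (n : ℝ) ^ (-a : ℝ) ≤ p n) :
    Filter.liminf (fun lam : ℝ =>
        Real.log (F (Real.sqrt lam) - b) / Real.log lam) (𝓝[>] (0:ℝ)) ≤ a := by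
  obtain ⟨C, hC, hlow'⟩ := hlow
  rw [Filter.liminf_eq]
  refine Real.sSup_le ?_ ha.le
  rintro c hc
  have hc' : ∀ᶠ lam in 𝓝[>] (0:ℝ),
      c ≤ Real.log (F (Real.sqrt lam) - b) / Real.log lam := hc
  refine le_of_forall_pos_le_add fun ε hε => ?_
  have key := stmt10_aux F b p (fun lam hlam n => (hp lam hlam n).2) a ha C hC hlow' ε hε
  obtain ⟨lam, h1, h2⟩ := (hc'.and key).exists
  linarith
end
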